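/- Let p_1 < p_2 < ⋯ be the primes in increasing order, P_ℓ = p_1 p_2 ⋯ p_ℓ, and define sets I_ℓ ⊆ ℕ recursively by I_1 = {1} and I_{ℓ+1} = { i + j·P_ℓ : i ∈ I_ℓ, 0 ≤ j < p_{ℓ+1}, p_{ℓ+1} ∤ (i + j·P_ℓ) }. Define T_ℓ = ∑_{y ∈ I_ℓ} √(gcd(y−1, P_ℓ)). Then for every ℓ ≥ 1: (a) |I_{ℓ+1}| = |I_ℓ|·(p_{ℓ+1} − 1), and (b) T_{ℓ+1} = T_ℓ·(p_{ℓ+1} − 2 + √(p_{ℓ+1})). -/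

import Mathlib

open Finset

/-- `nthPrime ℓ` is the (ℓ+1)-st prime, i.e. `p_{ℓ+1}` in the paper's notation. -/
noncomputable def nthPrime (ℓ : ℕ) : ℕ := Nat.nth Nat.Prime ℓ

/-- `primorial ℓ = P_ℓ`, the product of the first `ℓ` primes. -/
noncomputable def primorialP (ℓ : ℕ) : ℕ := ∏ i ∈ Finset.range ℓ, nthPrime i

/-- `Iset n` is the set `I_{n+1}` of the paper: `I_1 = {1}` and
`I_{ℓ+1} = { i + j P_ℓ : i ∈ I_ℓ, 0 ≤ j < p_{ℓ+1}, p_{ℓ+1} ∤ (i + j P_ℓ) }`. -/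
noncomputable def Iset : ℕ → Finset ℕ
  | 0 => {1}
  | n + 1 =>
    ((Iset n ×ˢ Finset.range (nthPrime (n + 1))).image
        (fun q => q.1 + q.2 * primorialP (n + 1))).filter
      (fun x => ¬ nthPrime (n + 1) ∣ x)

/-- `Tsum n` is `T_{n+1}` of the paper: `T_ℓ = ∑_{y ∈ I_ℓ} √(gcd(y−1, P_ℓ))`. -/
noncomputable def Tsum (n : ℕ) : ℝ :=
  ∑ y ∈ Iset n, Real.sqrt (Nat.gcd (y - 1) (primorialP (n + 1)))

lemma nthPrime_prime (ℓ : ℕ) : (nthPrime ℓ).Prime := Nat.prime_nth_prime ℓ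

lemma primorialP_pos (ℓ : ℕ) : 0 < primorialP ℓ :=
  Finset.prod_pos fun i _ => (nthPrime_prime i).pos

lemma primorialP_succ (ℓ : ℕ) : primorialP (ℓ + 1) = primorialP ℓ * nthPrime ℓ :=
  Finset.prod_range_succ _ _

lemma coprime_primorialP (n : ℕ) :
    Nat.Coprime (primorialP (n + 1)) (nthPrime (n + 1)) := by
  apply Nat.Coprime.prod_left
  intro i hi
  rw [Nat.coprime_primes (nthPrime_prime i) (nthPrime_prime (n + 1))]
  exact ne_of_lt ((Nat.nth_lt_nth Nat.infinite_setOf_prime).2 (Finset.mem_range.1 hi))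

lemma Iset_bounds : ∀ n, ∀ y ∈ Iset n, 1 ≤ y ∧ y ≤ primorialP (n + 1)
  | 0, y, hy => by
    simp only [Iset, Finset.mem_singleton] at hy
    subst hy
    exact ⟨le_refl 1, primorialP_pos 1⟩
  | n + 1, y, hy => by
    simp only [Iset, Finset.mem_filter, Finset.mem_image, Finset.mem_product,
      Finset.mem_range, Prod.exists] at hy
    obtain ⟨⟨i, j, ⟨hi, hj⟩, rfl⟩, -⟩ := hy
    obtain ⟨h1, h2⟩ := Iset_bounds n i hi
    refine ⟨by omega, ?_⟩
    have hj' : j + 1 ≤ nthPrime (n + 1) := hj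
    calc i + j * primorialP (n + 1) ≤ primorialP (n + 1) + j * primorialP (n + 1) := by omega
      _ = (j + 1) * primorialP (n + 1) := by ring
      _ ≤ nthPrime (n + 1) * primorialP (n + 1) := Nat.mul_le_mul_right _ hj'
      _ = primorialP (n + 2) := by rw [primorialP_succ (n + 1), mul_comm]

lemma mem_single_iff {p : ℕ} [Fact p.Prime] {P : ℕ} (hPz : (P : ZMod p) ≠ 0)
    (i : ℕ) (t : ZMod p) {j : ℕ} (hj : j < p) :
    ((i + j * P : ℕ) : ZMod p) = t ↔ j = ((t - i) * (P : ZMod p)⁻¹).val := by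
  have h1 : (((i + j * P : ℕ) : ZMod p) = t) ↔ (j : ZMod p) * P = t - i := by
    push_cast
    constructor <;> intro h <;> linear_combination h
  have h2 : ((j : ZMod p) = (t - i) * (P : ZMod p)⁻¹) ↔ (j : ZMod p) * P = t - i :=
    eq_mul_inv_iff_mul_eq₀ hPz
  rw [h1, ← h2]
  constructor
  · intro h
    rw [← ZMod.val_cast_of_lt hj, h]
  · intro h
    rw [h, ZMod.natCast_rightInverse _]

lemma filter_single {p : ℕ} [Fact p.Prime] {P : ℕ} (hPz : (P : ZMod p) ≠ 0)
    (i : ℕ) (t : ZMod p) :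
    (Finset.range p).filter (fun j => ((i + j * P : ℕ) : ZMod p) = t)
      = {((t - i) * (P : ZMod p)⁻¹).val} := by
  ext j
  simp only [Finset.mem_filter, Finset.mem_range, Finset.mem_singleton]
  constructor
  · rintro ⟨hj, h⟩
    exact (mem_single_iff hPz i t hj).1 h
  · rintro rfl
    have hlt : (((t - i) * (P : ZMod p)⁻¹).val) < p := ZMod.val_lt _
    exact ⟨hlt, (mem_single_iff hPz i t hlt).2 rfl⟩

/-- recurrences for `|I_ℓ|` and `T_ℓ` (here `ℓ = n + 1 ≥ 1`). -/
theorem Iset_card_and_Tsum_recurrence (n : ℕ) :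
    (Iset (n + 1)).card = (Iset n).card * (nthPrime (n + 1) - 1) ∧
    Tsum (n + 1) =
      Tsum n * ((nthPrime (n + 1) : ℝ) - 2 + Real.sqrt (nthPrime (n + 1))) := by
  classical
  have hp : (nthPrime (n + 1)).Prime := nthPrime_prime _
  haveI : Fact (nthPrime (n + 1)).Prime := ⟨hp⟩
  set p := nthPrime (n + 1) with hpdef
  set P := primorialP (n + 1) with hPdef
  have hPpos : 0 < P := primorialP_pos _
  have hcop : Nat.Coprime P p := coprime_primorialP n
  have hpdvdP : ¬ p ∣ P := (hp.coprime_iff_not_dvd).1 hcop.symm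
  have hPz : (P : ZMod p) ≠ 0 := by
    rw [Ne, ZMod.natCast_eq_zero_iff]
    exact hpdvdP
  -- the set `Iset (n+1)` as the injective image of a filtered product
  set f : ℕ × ℕ → ℕ := fun q => q.1 + q.2 * P with hfdef
  set S : Finset (ℕ × ℕ) := (Iset n ×ˢ Finset.range p).filter (fun q => ¬ p ∣ f q) with hSdef
  have hIs : Iset (n + 1) = S.image f := by
    rw [Iset, Finset.filter_image]
  have hinj : ∀ q1 ∈ S, ∀ q2 ∈ S, f q1 = f q2 → q1 = q2 := by
    rintro ⟨i1, j1⟩ hq1 ⟨i2, j2⟩ hq2 heq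
    simp only [hSdef, Finset.mem_filter, Finset.mem_product, Finset.mem_range] at hq1 hq2
    obtain ⟨⟨hi1, hj1⟩, -⟩ := hq1
    obtain ⟨⟨hi2, hj2⟩, -⟩ := hq2
    obtain ⟨hi1a, hi1b⟩ := Iset_bounds n i1 hi1
    obtain ⟨hi2a, hi2b⟩ := Iset_bounds n i2 hi2
    simp only [hfdef] at heq
    have he : (i1 - 1) + j1 * P = (i2 - 1) + j2 * P := by omega
    have hm1 : ((i1 - 1) + j1 * P) % P = i1 - 1 := by
      rw [Nat.add_mul_mod_self_right]
      exact Nat.mod_eq_of_lt (by omega)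
    have hm2 : ((i2 - 1) + j2 * P) % P = i2 - 1 := by
      rw [Nat.add_mul_mod_self_right]
      exact Nat.mod_eq_of_lt (by omega)
    have hi : i1 = i2 := by rw [he] at hm1; omega
    subst hi
    have hj : j1 = j2 := by
      have : j1 * P = j2 * P := by omega
      exact Nat.eq_of_mul_eq_mul_right hPpos this
    rw [hj]
  -- counting the "bad" j for each i
  have hdvd_iff : ∀ (i : ℕ), ∀ {j : ℕ}, j < p →
      (p ∣ i + j * P ↔ j = ((0 - (i : ZMod p)) * (P : ZMod p)⁻¹).val) := by
    intro i j hj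
    rw [← ZMod.natCast_eq_zero_iff]
    exact mem_single_iff hPz i 0 hj
  have hrow : ∀ i : ℕ,
      ((Finset.range p).filter (fun j => ¬ p ∣ i + j * P)).card = p - 1 := by
    intro i
    have h1 : ((Finset.range p).filter (fun j => p ∣ i + j * P))
        = {((0 - (i : ZMod p)) * (P : ZMod p)⁻¹).val} := by
      rw [← filter_single hPz i 0]
      apply Finset.filter_congr
      intro j hj
      rw [Finset.mem_range] at hj
      simp only [ZMod.natCast_eq_zero_iff]
    have h2 := Finset.card_filter_add_card_filter_not
      (s := Finset.range p) (p := fun j => p ∣ i + j * P)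
    rw [h1, Finset.card_singleton, Finset.card_range] at h2
    omega
  constructor
  · -- cardinality
    rw [hIs, Finset.card_image_of_injOn (by exact fun q1 h1 q2 h2 => hinj q1 h1 q2 h2)]
    rw [hSdef, Finset.card_filter, Finset.sum_product]
    have : ∀ i ∈ Iset n,
        (∑ j ∈ Finset.range p, if ¬ p ∣ f (i, j) then 1 else 0) = p - 1 := by
      intro i _
      rw [← Finset.card_filter]
      exact hrow i
    rw [Finset.sum_congr rfl this, Finset.sum_const, smul_eq_mul]
  · -- the sum
    have hPP : primorialP (n + 2) = P * p := primorialP_succ (n + 1)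
    rw [Tsum, hIs, Finset.sum_image hinj, hSdef, Finset.sum_filter, Finset.sum_product]
    have hmain : ∀ i ∈ Iset n,
        (∑ j ∈ Finset.range p,
            if ¬ p ∣ f (i, j)
            then Real.sqrt (Nat.gcd (f (i, j) - 1) (primorialP (n + 2))) else 0)
          = Real.sqrt (Nat.gcd (i - 1) P) * ((p : ℝ) - 2 + Real.sqrt p) := by
      intro i hi
      obtain ⟨hi1, hi2⟩ := Iset_bounds n i hi
      set g : ℕ := Nat.gcd (i - 1) P with hgdef
      set b : ℕ := ((0 - (i : ZMod p)) * (P : ZMod p)⁻¹).val with hbdef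
      set c : ℕ := ((1 - (i : ZMod p)) * (P : ZMod p)⁻¹).val with hcdef
      have hbc : b ≠ c := by
        intro h
        have hval : ((0 - (i : ZMod p)) * (P : ZMod p)⁻¹)
            = ((1 - (i : ZMod p)) * (P : ZMod p)⁻¹) := by
          apply ZMod.val_injective
          exact h
        have := mul_right_cancel₀ (inv_ne_zero hPz) hval
        have h01 : (0 : ZMod p) = 1 := by linear_combination this
        exact zero_ne_one h01
      have hcond : ∀ j ∈ Finset.range p,
          (if ¬ p ∣ f (i, j)
            then Real.sqrt (Nat.gcd (f (i, j) - 1) (primorialP (n + 2))) else 0)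
          = (if j = b then 0 else if j = c then Real.sqrt g * Real.sqrt p
              else Real.sqrt g) := by
        intro j hj
        rw [Finset.mem_range] at hj
        have hb : p ∣ i + j * P ↔ j = b := hdvd_iff i hj
        have hc : ((i + j * P : ℕ) : ZMod p) = 1 ↔ j = c := mem_single_iff hPz i 1 hj
        by_cases h0 : j = b
        · rw [if_pos h0, if_neg (by simp only [hfdef]; exact not_not_intro (hb.2 h0))]
        · have hdvd : ¬ p ∣ i + j * P := fun h => h0 (hb.1 h)
          rw [if_pos hdvd, if_neg h0]
          have ha : f (i, j) - 1 = (i - 1) + j * P := by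
            simp only [hfdef]; omega
          rw [ha, hPP]
          have hgP : Nat.gcd ((i - 1) + j * P) P = g := Nat.gcd_add_mul_right_left _ _ _
          by_cases h1 : j = c
          · rw [if_pos h1]
            have hmod : p ∣ (i - 1) + j * P := by
              have h1' : ((i + j * P : ℕ) : ZMod p) = ((1 : ℕ) : ZMod p) := by
                rw [Nat.cast_one]; exact hc.2 h1
              have := (ZMod.natCast_eq_natCast_iff _ _ _).1 h1'
              have hd := (Nat.modEq_iff_dvd' (by omega : 1 ≤ i + j * P)).1 this.symm
              have : i + j * P - 1 = (i - 1) + j * P := by omega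
              rwa [this] at hd
            obtain ⟨m, hm⟩ := hmod
            rw [hm] at hgP ⊢
            have hmP : Nat.gcd (p * m) P = Nat.gcd m P :=
              Nat.Coprime.gcd_mul_left_cancel m hcop.symm
            have hval : Nat.gcd (p * m) (P * p) = p * Nat.gcd m P := by
              rw [mul_comm P p, Nat.gcd_mul_left]
            rw [hval, hmP.symm.trans hgP]
            push_cast
            rw [Real.sqrt_mul (by positivity)]
            ring
          · rw [if_neg h1]
            have hnd : ¬ p ∣ (i - 1) + j * P := by
              intro h
              apply h1
              apply hc.1
              have : i + j * P - 1 = (i - 1) + j * P := by omega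
              rw [← this] at h
              have := (Nat.modEq_iff_dvd' (by omega : 1 ≤ i + j * P)).2 h
              rw [Nat.cast_one.symm, ZMod.natCast_eq_natCast_iff]
              exact this.symm
            have hcp : Nat.Coprime p ((i - 1) + j * P) := (hp.coprime_iff_not_dvd).2 hnd
            rw [Nat.Coprime.gcd_mul_right_cancel_right P hcp, hgP]
      rw [Finset.sum_congr rfl hcond]
      have hbmem : b ∈ Finset.range p := Finset.mem_range.2 (ZMod.val_lt _)
      have hcmem : c ∈ (Finset.range p).erase b :=
        Finset.mem_erase.2 ⟨fun h => hbc h.symm, Finset.mem_range.2 (ZMod.val_lt _)⟩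
      rw [← Finset.add_sum_erase _ _ hbmem, if_pos rfl, zero_add]
      have hstep1 : ∀ j ∈ (Finset.range p).erase b,
          (if j = b then 0 else if j = c then Real.sqrt g * Real.sqrt p else Real.sqrt g)
          = (if j = c then Real.sqrt g * Real.sqrt p else Real.sqrt g) := by
        intro j hj
        rw [if_neg (Finset.ne_of_mem_erase hj)]
      rw [Finset.sum_congr rfl hstep1, ← Finset.add_sum_erase _ _ hcmem, if_pos rfl]
      have hstep2 : ∀ j ∈ ((Finset.range p).erase b).erase c,
          (if j = c then Real.sqrt g * Real.sqrt p else Real.sqrt g) = Real.sqrt g := by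
        intro j hj
        rw [if_neg (Finset.ne_of_mem_erase hj)]
      rw [Finset.sum_congr rfl hstep2, Finset.sum_const,
        Finset.card_erase_of_mem hcmem, Finset.card_erase_of_mem hbmem,
        Finset.card_range, nsmul_eq_mul]
      have h2p : 2 ≤ p := hp.two_le
      have hcast : ((p - 1 - 1 : ℕ) : ℝ) = (p : ℝ) - 2 := by
        have : p - 1 - 1 = p - 2 := by omega
        rw [this, Nat.cast_sub h2p, Nat.cast_ofNat]
      rw [hcast]
      ring
    rw [Finset.sum_congr rfl hmain, ← Finset.sum_mul, Tsum, ← hPdef]
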